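/- Let n ≥ 1 and let W = (W₁,…,Wₙ) be the weighted left multi-shift on F²(Hₙ) associated with a weight sequence μ = {μ_β}_{|β|≥1} of strictly positive real numbers with sup_{α∈𝔽ₙ⁺} μ_{g_iα} < ∞ for each i. If μ_β → 0 as |β| → ∞ (that is, for every ε > 0 there is N such that μ_β < ε whenever |β| ≥ N), then the joint spectral radius satisfies r(W) = 0. -/

import Mathlib

open Filter ContinuousLinearMap
open scoped ComplexConjugate
open scoped ENNReal

noncomputable section

attribute [local instance] Classical.decEq

abbrev Word (n : ℕ) := FreeMonoid (Fin n)

abbrev Fock (n : ℕ) := lp (fun _ : Word n => ℂ) 2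

def fockE {n : ℕ} (α : Word n) : Fock n := lp.single 2 α 1

def wordOp {n : ℕ} {H : Type*} [NormedAddCommGroup H] [InnerProductSpace ℂ H]
    (T : Fin n → H →L[ℂ] H) (α : Word n) : H →L[ℂ] H :=
  ((FreeMonoid.toList α).map T).prod

def wordOfFn {n k : ℕ} (f : Fin k → Fin n) : Word n := FreeMonoid.ofList (List.ofFn f)

def rowSum {n : ℕ} {H : Type*} [NormedAddCommGroup H] [InnerProductSpace ℂ H]
    [CompleteSpace H] (T : Fin n → H →L[ℂ] H) (k : ℕ) : H →L[ℂ] H :=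
  ∑ f : Fin k → Fin n, wordOp T (wordOfFn f) * adjoint (wordOp T (wordOfFn f))

def jsr {n : ℕ} {H : Type*} [NormedAddCommGroup H] [InnerProductSpace ℂ H]
    [CompleteSpace H] (T : Fin n → H →L[ℂ] H) : ℝ :=
  limUnder atTop fun k : ℕ => ‖rowSum T k‖ ^ ((1 : ℝ) / (2 * k))

def muProd {n : ℕ} (μ : Word n → ℝ) (β α : Word n) : ℝ :=
  ((List.range (FreeMonoid.length β)).map
    fun j => μ (FreeMonoid.ofList ((FreeMonoid.toList β).drop j) * α)).prod

def IsWeightedShift {n : ℕ} (μ : Word n → ℝ) (W : Fin n → Fock n →L[ℂ] Fock n) : Prop :=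
  ∀ (i : Fin n) (α : Word n),
    W i (fockE α) = (μ (FreeMonoid.of i * α) : ℂ) • fockE (FreeMonoid.of i * α)

def BddWeights {n : ℕ} (μ : Word n → ℝ) : Prop :=
  ∀ i : Fin n, BddAbove (Set.range fun α : Word n => μ (FreeMonoid.of i * α))

def IsWeightedShiftTensor {n : ℕ} {H : Type*} [NormedAddCommGroup H] [InnerProductSpace ℂ H]
    (μ : Word n → ℝ)
    (Wt : Fin n → lp (fun _ : Word n => H) 2 →L[ℂ] lp (fun _ : Word n => H) 2) : Prop :=
  ∀ (i : Fin n) (α : Word n) (h : H),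
    Wt i (lp.single 2 α h) = (μ (FreeMonoid.of i * α) : ℂ) • lp.single 2 (FreeMonoid.of i * α) h

def polyOp {n : ℕ} {H : Type*} [NormedAddCommGroup H] [InnerProductSpace ℂ H]
    (T : Fin n → H →L[ℂ] H) (c : Word n →₀ ℂ) : H →L[ℂ] H :=
  c.sum fun α z => z • wordOp T α

/-! ### Auxiliary lemmas -/

lemma muProd_cons {n : ℕ} (μ : Word n → ℝ) (i : Fin n) (β γ : Word n) :
    muProd μ (FreeMonoid.of i * β) γ
      = μ (FreeMonoid.of i * β * γ) * muProd μ β γ := by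
  simp only [muProd, FreeMonoid.length_mul, FreeMonoid.length_of, FreeMonoid.toList_mul,
    FreeMonoid.toList_of]
  rw [add_comm 1 β.length, List.range_succ_eq_map]
  simp only [List.map_cons, List.prod_cons, List.map_map]
  congr 1

lemma muProd_eq_prod {n : ℕ} (μ : Word n → ℝ) (β γ : Word n) :
    muProd μ β γ = ∏ j ∈ Finset.range (FreeMonoid.length β),
      μ (FreeMonoid.ofList ((FreeMonoid.toList β).drop j) * γ) := rfl

lemma length_drop_word {n : ℕ} (β γ : Word n) (j : ℕ) :
    FreeMonoid.length (FreeMonoid.ofList ((FreeMonoid.toList β).drop j) * γ)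
      = (FreeMonoid.length β - j) + FreeMonoid.length γ := by
  simp only [FreeMonoid.length_mul]
  congr 1
  exact List.length_drop

lemma muProd_nonneg {n : ℕ} (μ : Word n → ℝ)
    (hμ : ∀ β : Word n, 1 ≤ FreeMonoid.length β → 0 < μ β) (β γ : Word n) :
    0 ≤ muProd μ β γ := by
  rw [muProd_eq_prod]
  refine Finset.prod_nonneg fun j hj => ?_
  refine (hμ _ ?_).le
  rw [Finset.mem_range] at hj
  rw [length_drop_word]
  omega

lemma wordOp_cons {n : ℕ} (W : Fin n → Fock n →L[ℂ] Fock n) (i : Fin n) (β : Word n) :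
    wordOp W (FreeMonoid.of i * β) = W i * wordOp W β := by
  simp [wordOp, FreeMonoid.toList_mul, FreeMonoid.toList_of]

lemma wordOp_one {n : ℕ} (W : Fin n → Fock n →L[ℂ] Fock n) : wordOp W 1 = 1 := by
  simp [wordOp]

lemma wordOp_fockE_list {n : ℕ} (μ : Word n → ℝ) (W : Fin n → Fock n →L[ℂ] Fock n)
    (hW : IsWeightedShift μ W) :
    ∀ (l : List (Fin n)) (γ : Word n),
      wordOp W (FreeMonoid.ofList l) (fockE γ)
        = ((muProd μ (FreeMonoid.ofList l) γ : ℝ) : ℂ) • fockE (FreeMonoid.ofList l * γ)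
  | [], γ => by
      simp only [FreeMonoid.ofList_nil, wordOp_one]
      simp [muProd]
  | i :: t, γ => by
      rw [FreeMonoid.ofList_cons, wordOp_cons, muProd_cons]
      have h1 : (W i * wordOp W (FreeMonoid.ofList t)) (fockE γ)
          = W i (wordOp W (FreeMonoid.ofList t) (fockE γ)) := rfl
      rw [h1, wordOp_fockE_list μ W hW t γ, map_smul, hW i (FreeMonoid.ofList t * γ)]
      rw [smul_smul, mul_assoc]
      push_cast
      ring_nf

lemma wordOp_fockE {n : ℕ} (μ : Word n → ℝ) (W : Fin n → Fock n →L[ℂ] Fock n)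
    (hW : IsWeightedShift μ W) (β γ : Word n) :
    wordOp W β (fockE γ) = ((muProd μ β γ : ℝ) : ℂ) • fockE (β * γ) := by
  have := wordOp_fockE_list μ W hW (FreeMonoid.toList β) γ
  rwa [FreeMonoid.ofList_toList] at this

/-- The coordinate evaluation as a continuous linear map. -/
def evalCLM {n : ℕ} (β : Word n) : Fock n →L[ℂ] ℂ :=
  LinearMap.mkContinuous
    { toFun := fun y => y β
      map_add' := fun y z => by simp [lp.coeFn_add]
      map_smul' := fun a y => by simp [lp.coeFn_smul] }
    1 (fun y => by
      rw [one_mul]; exact lp.norm_apply_le_norm (by norm_num : (2 : ℝ≥0∞) ≠ 0) y β)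

@[simp] lemma evalCLM_apply {n : ℕ} (β : Word n) (y : Fock n) : evalCLM β y = y β := rfl

lemma fockE_apply {n : ℕ} (α β : Word n) :
    (fockE α : Fock n) β = if β = α then (1 : ℂ) else 0 := by
  rw [fockE, lp.single_apply]
  split <;> simp_all

lemma norm_sq_eq_tsum {n : ℕ} (y : Fock n) : ‖y‖ ^ 2 = ∑' β, ‖y β‖ ^ 2 := by
  have h := lp.norm_rpow_eq_tsum (p := 2) (by norm_num) y
  rw [show (2 : ℝ≥0∞).toReal = ((2 : ℕ) : ℝ) by norm_num] at h
  simpa [Real.rpow_natCast] using h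

lemma summable_norm_sq {n : ℕ} (y : Fock n) : Summable fun β => ‖y β‖ ^ 2 := by
  have h := (lp.memℓp y).summable (p := 2) (by norm_num)
  rw [show (2 : ℝ≥0∞).toReal = ((2 : ℕ) : ℝ) by norm_num] at h
  simpa [Real.rpow_natCast] using h

/-- Norm bound for operators acting as a weighted shift on the canonical basis. -/
lemma opNorm_le_of_shift {n : ℕ} (S : Fock n →L[ℂ] Fock n) (f : Word n → Word n)
    (hf : Function.Injective f) (c : Word n → ℝ) (C : ℝ) (hC : 0 ≤ C)
    (hc : ∀ γ, |c γ| ≤ C)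
    (hS : ∀ γ, S (fockE γ) = ((c γ : ℝ) : ℂ) • fockE (f γ)) : ‖S‖ ≤ C := by
  refine S.opNorm_le_bound hC fun x => ?_
  have h1 : HasSum (fun γ : Word n => lp.single 2 γ (x γ)) x :=
    lp.hasSum_single (by norm_num) x
  have h2 : HasSum (fun γ : Word n => ((x γ * c γ : ℂ)) • fockE (f γ)) (S x) := by
    have he : ∀ γ : Word n, S (lp.single 2 γ (x γ)) = ((x γ * c γ : ℂ)) • fockE (f γ) := by
      intro γ
      have hx : lp.single 2 γ (x γ) = x γ • fockE γ := by
        rw [fockE, ← lp.single_smul, smul_eq_mul, mul_one]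
      rw [hx, map_smul, hS, smul_smul]
    simpa only [he] using h1.mapL S
  have hz : ∀ β : Word n, β ∉ Set.range f → (S x) β = 0 := by
    intro β hβ
    have hne : ∀ γ : Word n, (fockE (f γ) : Fock n) β = 0 := fun γ => by
      rw [fockE_apply, if_neg]
      exact fun h => hβ ⟨γ, h.symm⟩
    have h3 := h2.mapL (evalCLM β)
    simp only [map_smul, evalCLM_apply, smul_eq_mul, hne, mul_zero] at h3
    exact h3.unique hasSum_zero
  have hval : ∀ γ₀ : Word n, (S x) (f γ₀) = x γ₀ * (c γ₀ : ℂ) := by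
    intro γ₀
    have h3 := h2.mapL (evalCLM (f γ₀))
    simp only [map_smul, evalCLM_apply, smul_eq_mul, fockE_apply] at h3
    have hfun : (fun γ : Word n => (x γ * (c γ : ℂ)) * (if f γ₀ = f γ then (1:ℂ) else 0))
        = fun γ => if γ = γ₀ then x γ₀ * (c γ₀ : ℂ) else 0 := by
      funext γ
      by_cases h : γ = γ₀
      · subst h; simp
      · rw [if_neg h, if_neg, mul_zero]
        exact fun hh => h (hf hh.symm)
    rw [show (fun γ : Word n => (x γ * (c γ : ℂ)) * (if f γ₀ = f γ then (1:ℂ) else 0))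
        = fun γ => if γ = γ₀ then x γ₀ * (c γ₀ : ℂ) else 0 from hfun] at h3
    exact h3.unique (hasSum_ite_eq γ₀ _)
  have hsupp : Function.support (fun β => ‖(S x) β‖ ^ 2) ⊆ Set.range f := by
    intro β hβ
    by_contra hr
    exact hβ (by simp [hz β hr])
  have hnorm1 : ‖S x‖ ^ 2 = ∑' γ, ‖(S x) (f γ)‖ ^ 2 := by
    rw [norm_sq_eq_tsum]
    exact (hf.tsum_eq hsupp).symm
  have hsumf : Summable fun γ => ‖(S x) (f γ)‖ ^ 2 := by
    have := (hf.summable_iff (f := fun β => ‖(S x) β‖ ^ 2)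
      (fun β hβ => by simp [hz β hβ])).2 (summable_norm_sq (S x))
    exact this
  have hptwise : ∀ γ : Word n, ‖(S x) (f γ)‖ ^ 2 ≤ C ^ 2 * ‖x γ‖ ^ 2 := by
    intro γ
    rw [hval γ, norm_mul, Complex.norm_real, Real.norm_eq_abs, mul_pow]
    have h1 : |c γ| ^ 2 ≤ C ^ 2 := by
      have := hc γ
      nlinarith [abs_nonneg (c γ)]
    nlinarith [sq_nonneg ‖x γ‖, sq_nonneg (|c γ|)]
  have hsum2 : Summable fun γ : Word n => C ^ 2 * ‖x γ‖ ^ 2 :=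
    (summable_norm_sq x).mul_left _
  have hle : ‖S x‖ ^ 2 ≤ (C * ‖x‖) ^ 2 := by
    rw [hnorm1, mul_pow]
    calc ∑' γ, ‖(S x) (f γ)‖ ^ 2 ≤ ∑' γ, C ^ 2 * ‖x γ‖ ^ 2 :=
          Summable.tsum_le_tsum hptwise hsumf hsum2
      _ = C ^ 2 * ∑' γ, ‖x γ‖ ^ 2 := tsum_mul_left
      _ = C ^ 2 * ‖x‖ ^ 2 := by rw [← norm_sq_eq_tsum]
  calc ‖S x‖ = Real.sqrt (‖S x‖ ^ 2) := (Real.sqrt_sq (norm_nonneg _)).symm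
    _ ≤ Real.sqrt ((C * ‖x‖) ^ 2) := Real.sqrt_le_sqrt hle
    _ = C * ‖x‖ := Real.sqrt_sq (by positivity)

lemma muProd_le {n : ℕ} (μ : Word n → ℝ)
    (hμ : ∀ β : Word n, 1 ≤ FreeMonoid.length β → 0 < μ β)
    (M ε : ℝ) (N k : ℕ) (hM1 : 1 ≤ M)
    (hMle : ∀ β : Word n, 1 ≤ FreeMonoid.length β → μ β ≤ M)
    (hε : 0 < ε) (hε1 : ε ≤ 1)
    (hNε : ∀ β : Word n, N ≤ FreeMonoid.length β → μ β < ε)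
    (hN1 : 1 ≤ N) (hk : N ≤ k)
    (α γ : Word n) (hα : FreeMonoid.length α = k) :
    muProd μ α γ ≤ ε ^ (k - N) * M ^ N := by
  rw [muProd_eq_prod, hα]
  have hfac : ∀ j ∈ Finset.range k,
      μ (FreeMonoid.ofList ((FreeMonoid.toList α).drop j) * γ)
        ≤ if j ≤ k - N then ε else M := by
    intro j hj
    rw [Finset.mem_range] at hj
    have hlen := length_drop_word α γ j
    rw [hα] at hlen
    split
    · next h => exact (hNε _ (by omega)).le
    · next h => exact hMle _ (by omega)
  have hnn : ∀ j ∈ Finset.range k,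
      0 ≤ μ (FreeMonoid.ofList ((FreeMonoid.toList α).drop j) * γ) := by
    intro j hj
    rw [Finset.mem_range] at hj
    refine (hμ _ ?_).le
    have hlen := length_drop_word α γ j
    rw [hα] at hlen
    omega
  calc ∏ j ∈ Finset.range k, μ (FreeMonoid.ofList ((FreeMonoid.toList α).drop j) * γ)
      ≤ ∏ j ∈ Finset.range k, (if j ≤ k - N then ε else M) :=
        Finset.prod_le_prod hnn hfac
    _ = ε ^ ((Finset.range k).filter (fun j => j ≤ k - N)).card
        * M ^ ((Finset.range k).filter (fun j => ¬ j ≤ k - N)).card := by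
        rw [Finset.prod_ite]
        simp [Finset.prod_const]
    _ ≤ ε ^ (k - N) * M ^ N := by
        have h1 : (Finset.range k).filter (fun j => j ≤ k - N) = Finset.range (k - N + 1) := by
          ext j
          simp only [Finset.mem_filter, Finset.mem_range]
          omega
        have h2 : (Finset.range k).filter (fun j => ¬ j ≤ k - N) = Finset.Ico (k - N + 1) k := by
          ext j
          simp only [Finset.mem_filter, Finset.mem_range, Finset.mem_Ico]
          omega
        rw [h1, h2, Finset.card_range, Nat.card_Ico]
        have e1 : ε ^ (k - N + 1) ≤ ε ^ (k - N) := pow_le_pow_of_le_one hε.le hε1 (by omega)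
        have e2 : M ^ (k - (k - N + 1)) ≤ M ^ N := pow_le_pow_right₀ hM1 (by omega)
        exact mul_le_mul e1 e2 (by positivity) (by positivity)

lemma norm_adjoint' {n : ℕ} (T : Fock n →L[ℂ] Fock n) : ‖adjoint T‖ = ‖T‖ :=
  LinearIsometryEquiv.norm_map
    (ContinuousLinearMap.adjoint (𝕜 := ℂ) (E := Fock n) (F := Fock n)) T

theorem stmt_3 (n : ℕ) (hn : 1 ≤ n) (μ : Word n → ℝ)
    (hμ : ∀ β : Word n, 1 ≤ FreeMonoid.length β → 0 < μ β)
    (hbdd : BddWeights μ)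
    (W : Fin n → Fock n →L[ℂ] Fock n) (hW : IsWeightedShift μ W)
    (hlim : ∀ ε : ℝ, 0 < ε → ∃ N : ℕ, ∀ β : Word n, N ≤ FreeMonoid.length β → μ β < ε) :
    Tendsto (fun k : ℕ => ‖rowSum W k‖ ^ ((1 : ℝ) / (2 * k))) atTop (nhds 0) := by
  classical
  choose B hB using hbdd
  set M : ℝ := 1 + ∑ i, max (B i) 0 with hMdef
  have hM1 : 1 ≤ M :=
    le_add_of_nonneg_right (Finset.sum_nonneg fun i _ => le_max_right _ _)
  have hMle : ∀ β : Word n, 1 ≤ FreeMonoid.length β → μ β ≤ M := by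
    intro β hβ
    cases hl : FreeMonoid.toList β with
    | nil =>
      exfalso
      have h1 : β = 1 := by
        rw [← FreeMonoid.ofList_toList β, hl]
        rfl
      rw [h1, FreeMonoid.length_one] at hβ
      omega
    | cons i t =>
      have hβ' : β = FreeMonoid.of i * FreeMonoid.ofList t := by
        rw [← FreeMonoid.ofList_toList β, hl, FreeMonoid.ofList_cons]
      calc μ β = μ (FreeMonoid.of i * FreeMonoid.ofList t) := by rw [← hβ']
        _ ≤ B i := hB i (Set.mem_range_self (FreeMonoid.ofList t))
        _ ≤ max (B i) 0 := le_max_left _ _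
        _ ≤ ∑ i', max (B i') 0 :=
            Finset.single_le_sum (fun i' _ => le_max_right (B i') 0) (Finset.mem_univ i)
        _ ≤ M := by rw [hMdef]; linarith
  set s : ℝ := Real.sqrt n with hsdef
  have hn1 : (1:ℝ) ≤ (n:ℝ) := by exact_mod_cast hn
  have hs1 : 1 ≤ s := Real.one_le_sqrt.2 hn1
  have hs0 : 0 < s := lt_of_lt_of_le one_pos hs1
  have hs2 : s ^ 2 = (n:ℝ) := Real.sq_sqrt (by linarith)
  rw [Metric.tendsto_atTop]
  intro ε' hε'
  set ε : ℝ := min 1 (ε' / (2 * s)) with hεdef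
  have hεpos : 0 < ε := lt_min one_pos (div_pos hε' (by positivity))
  have hε1 : ε ≤ 1 := min_le_left _ _
  have hsε : s * ε < ε' := by
    calc s * ε ≤ s * (ε' / (2 * s)) :=
          mul_le_mul_of_nonneg_left (min_le_right _ _) hs0.le
      _ = ε' / 2 := by field_simp
      _ < ε' := by linarith
  obtain ⟨N₀, hN₀⟩ := hlim ε hεpos
  set N : ℕ := N₀ + 1 with hNdef
  have hN1 : 1 ≤ N := by omega
  have hNle : ∀ β : Word n, N ≤ FreeMonoid.length β → μ β < ε := fun β h =>
    hN₀ β (by omega)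
  -- operator norm bound
  have hop : ∀ k : ℕ, N ≤ k →
      ‖rowSum W k‖ ≤ (n:ℝ) ^ k * (ε ^ (k - N) * M ^ N) ^ 2 := by
    intro k hk
    set C : ℝ := ε ^ (k - N) * M ^ N with hCdef
    have hC0 : 0 ≤ C := by positivity
    have hterm : ∀ f : Fin k → Fin n,
        ‖wordOp W (wordOfFn f) * adjoint (wordOp W (wordOfFn f))‖ ≤ C ^ 2 := by
      intro f
      have hlen : FreeMonoid.length (wordOfFn f) = k := by
        exact List.length_ofFn
      have hnorm : ‖wordOp W (wordOfFn f)‖ ≤ C := by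
        refine opNorm_le_of_shift _ (fun γ => wordOfFn f * γ)
          (fun a b hab => mul_left_cancel hab) (fun γ => muProd μ (wordOfFn f) γ) C hC0
          (fun γ => ?_) (fun γ => wordOp_fockE μ W hW _ γ)
        rw [abs_of_nonneg (muProd_nonneg μ hμ _ γ)]
        exact muProd_le μ hμ M ε N k hM1 hMle hεpos hε1 hNle hN1 hk _ γ hlen
      calc ‖wordOp W (wordOfFn f) * adjoint (wordOp W (wordOfFn f))‖
          ≤ ‖wordOp W (wordOfFn f)‖ * ‖adjoint (wordOp W (wordOfFn f))‖ := norm_mul_le _ _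
        _ = ‖wordOp W (wordOfFn f)‖ * ‖wordOp W (wordOfFn f)‖ := by rw [norm_adjoint']
        _ ≤ C * C := mul_le_mul hnorm hnorm (norm_nonneg _) hC0
        _ = C ^ 2 := (sq C).symm
    calc ‖rowSum W k‖
        ≤ ∑ f : Fin k → Fin n,
            ‖wordOp W (wordOfFn f) * adjoint (wordOp W (wordOfFn f))‖ :=
          norm_sum_le _ _
      _ ≤ ∑ _f : Fin k → Fin n, C ^ 2 := Finset.sum_le_sum fun f _ => hterm f
      _ = (n:ℝ) ^ k * C ^ 2 := by
          rw [Finset.sum_const, Finset.card_univ]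
          simp only [Fintype.card_fun, Fintype.card_fin, nsmul_eq_mul]
          push_cast
          ring
  set D : ℝ := (M / ε) ^ (2 * N) with hDdef
  have hD : 0 < D := by positivity
  have hb : ∀ k : ℕ, N ≤ k →
      ‖rowSum W k‖ ^ ((1:ℝ)/(2*(k:ℝ))) ≤ (s * ε) * D ^ ((1:ℝ)/(2*(k:ℝ))) := by
    intro k hk
    have hk1 : 1 ≤ k := le_trans hN1 hk
    have hxeq : (n:ℝ) ^ k * (ε ^ (k - N) * M ^ N) ^ 2 = ((s*ε) ^ (2*k)) * D := by
      rw [hDdef, mul_pow s ε (2*k), mul_pow (ε ^ (k-N)) (M ^ N) 2, div_pow,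
        ← pow_mul ε (k-N) 2, ← pow_mul M N 2]
      have h1 : s ^ (2*k) = (n:ℝ) ^ k := by
        rw [pow_mul s 2 k, hs2]
      rw [h1]
      have h2 : (k - N) * 2 = 2*k - 2*N := by omega
      rw [h2]
      have h3 : ε ^ (2*k - 2*N) = ε ^ (2*k) / ε ^ (2*N) := by
        rw [pow_sub₀ ε hεpos.ne' (by omega), div_eq_mul_inv]
      rw [h3, mul_comm N 2]
      have hεne : (ε:ℝ) ^ (2*N) ≠ 0 := by positivity
      rw [div_eq_mul_inv, div_eq_mul_inv]
      ring
    have hmono := Real.rpow_le_rpow (norm_nonneg _) (hop k hk)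
      (by positivity : (0:ℝ) ≤ (1:ℝ)/(2*(k:ℝ)))
    rw [hxeq] at hmono
    refine hmono.trans ?_
    rw [Real.mul_rpow (by positivity) hD.le]
    have hpow : (((s*ε) ^ (2*k) : ℝ)) ^ ((1:ℝ)/(2*(k:ℝ))) = s * ε := by
      rw [← Real.rpow_natCast (s*ε) (2*k), ← Real.rpow_mul (by positivity)]
      have hne : ((2*k : ℕ) : ℝ) * ((1:ℝ)/(2*(k:ℝ))) = 1 := by
        have : (k:ℝ) ≠ 0 := Nat.cast_ne_zero.2 (by omega)
        push_cast
        field_simp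
      rw [hne, Real.rpow_one]
    rw [hpow]
  have h0 : Tendsto (fun k : ℕ => (1:ℝ)/(2*(k:ℝ))) atTop (nhds 0) := by
    apply Tendsto.const_div_atTop
    exact (tendsto_natCast_atTop_atTop (R := ℝ)).const_mul_atTop two_pos
  have hDlim : Tendsto (fun k : ℕ => D ^ ((1:ℝ)/(2*(k:ℝ)))) atTop (nhds 1) := by
    have hc : ContinuousAt (fun t : ℝ => D ^ t) 0 :=
      Real.continuousAt_const_rpow hD.ne'
    have := hc.tendsto.comp h0
    simpa [Real.rpow_zero, Function.comp_def] using this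
  have hblim : Tendsto (fun k : ℕ => (s*ε) * D ^ ((1:ℝ)/(2*(k:ℝ)))) atTop (nhds (s*ε)) := by
    simpa using tendsto_const_nhds.mul hDlim
  have hev : ∀ᶠ k : ℕ in atTop, (s*ε) * D ^ ((1:ℝ)/(2*(k:ℝ))) < ε' :=
    hblim.eventually_lt_const hsε
  obtain ⟨K, hK⟩ := eventually_atTop.1 (hev.and (eventually_ge_atTop N))
  refine ⟨K, fun k hk => ?_⟩
  obtain ⟨h1, h2⟩ := hK k hk
  rw [Real.dist_eq, sub_zero, abs_of_nonneg (Real.rpow_nonneg (norm_nonneg _) _)]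
  exact lt_of_le_of_lt (hb k h2) h1
end
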